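/- arXiv:1509.06245 — 3 statements merged into one kernel-verified Lean document; each statement's English description precedes it below -/
import Mathlib

section
/- Let m ≥ 1, let μ0 and μT be Borel probability measures on ℝ^m, and let q : ℝ^m × ℝ^m → ℝ be continuous, bounded, and strictly positive. If (ν0, νT) and (ν0′, νT′) are two pairs of σ-finite Borel measures on ℝ^m such that both the measure μ with density q with respect to ν0 ⊗ νT and the measure μ′ with density q with respect to ν0′ ⊗ νT′ have first marginal μ0 and second marginal μT, then μ = μ′ as measures on ℝ^m × ℝ^m. -/
open MeasureTheory Filter
open scoped ENNReal NNReal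

variable {α : Type*} [MeasurableSpace α]

/-- Marginal of a product measure with density. -/
lemma BJaux_map_fst (ρ τ : Measure α) [SigmaFinite ρ] [SigmaFinite τ]
    {Q : α × α → ℝ≥0∞} (hQ : Measurable Q) :
    ((ρ.prod τ).withDensity Q).map Prod.fst
      = ρ.withDensity (fun x => ∫⁻ y, Q (x, y) ∂τ) := by
  ext s hs
  rw [Measure.map_apply measurable_fst hs, withDensity_apply _ (measurable_fst hs),
    withDensity_apply _ hs]
  have h1 : (Prod.fst ⁻¹' s : Set (α × α)) = s ×ˢ Set.univ := by ext p; simp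
  rw [h1, ← Measure.prod_restrict, Measure.restrict_univ,
    MeasureTheory.lintegral_prod _ hQ.aemeasurable]

lemma BJaux_map_snd (ρ τ : Measure α) [SigmaFinite ρ] [SigmaFinite τ]
    {Q : α × α → ℝ≥0∞} (hQ : Measurable Q) :
    ((ρ.prod τ).withDensity Q).map Prod.snd
      = τ.withDensity (fun y => ∫⁻ x, Q (x, y) ∂ρ) := by
  ext s hs
  rw [Measure.map_apply measurable_snd hs, withDensity_apply _ (measurable_snd hs),
    withDensity_apply _ hs]
  have h1 : (Prod.snd ⁻¹' s : Set (α × α)) = Set.univ ×ˢ s := by ext p; simp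
  rw [h1, ← Measure.prod_restrict, Measure.restrict_univ,
    MeasureTheory.lintegral_prod_symm _ hQ.aemeasurable]

/-- A measure is absolutely continuous w.r.t. its withDensity by an everywhere
positive measurable density. -/
lemma BJaux_absCont (ρ : Measure α) {f : α → ℝ≥0∞}
    (hf : Measurable f) (hpos : ∀ x, 0 < f x) : ρ ≪ ρ.withDensity f := by
  refine Measure.AbsolutelyContinuous.mk (fun s hs h0 => ?_)
  rw [withDensity_apply _ hs, lintegral_eq_zero_iff hf] at h0
  have h1 : (ρ.restrict s) Set.univ = 0 := by
    have h2 := h0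
    rw [Filter.EventuallyEq, ae_iff] at h2
    have h3 : {a | ¬ f a = (0 : α → ℝ≥0∞) a} = Set.univ :=
      Set.eq_univ_of_forall fun a => (hpos a).ne'
    rwa [h3] at h2
  simpa using h1

lemma BJaux_cl_add_nonneg {n u v : ℝ} (hn : 0 ≤ n) (h : 0 ≤ u + v) :
    0 ≤ max (-n) (min n u) + max (-n) (min n v) := by
  rcases le_total n u with h1 | h1
  · have e : max (-n) (min n u) = n := by rw [min_eq_left h1, max_eq_right (by linarith)]
    have h2 : -n ≤ max (-n) (min n v) := le_max_left _ _
    linarith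
  · rcases le_total n v with h3 | h3
    · have e : max (-n) (min n v) = n := by rw [min_eq_left h3, max_eq_right (by linarith)]
      have h2 : -n ≤ max (-n) (min n u) := le_max_left _ _
      linarith
    · have e1 : u ≤ max (-n) (min n u) := by rw [min_eq_right h1]; exact le_max_right _ _
      have e2 : v ≤ max (-n) (min n v) := by rw [min_eq_right h3]; exact le_max_right _ _
      linarith

lemma BJaux_mul_nonneg_of_nonpos {x y : ℝ} (hx : x ≤ 0) (hy : y ≤ 0) : 0 ≤ x * y := by
  have h := mul_nonneg (neg_nonneg.2 hx) (neg_nonneg.2 hy)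
  rwa [neg_mul_neg] at h

lemma BJaux_cl_add_nonpos {n u v : ℝ} (hn : 0 ≤ n) (h : u + v ≤ 0) :
    max (-n) (min n u) + max (-n) (min n v) ≤ 0 := by
  have bu : max (-n) (min n u) ≤ n := max_le (by linarith) (min_le_left _ _)
  have bv : max (-n) (min n v) ≤ n := max_le (by linarith) (min_le_left _ _)
  rcases le_total u (-n) with h1 | h1
  · have e : max (-n) (min n u) = -n := by
      rw [max_eq_left]; exact le_trans (min_le_right _ _) h1
    linarith
  · rcases le_total v (-n) with h2 | h2
    · have e : max (-n) (min n v) = -n := by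
        rw [max_eq_left]; exact le_trans (min_le_right _ _) h2
      linarith
    · have e1 : max (-n) (min n u) ≤ u := max_le (by linarith) (min_le_right _ _)
      have e2 : max (-n) (min n v) ≤ v := max_le (by linarith) (min_le_right _ _)
      linarith


/-- Core entropy argument: if the clamped-log test integrals all vanish, the density is 1. -/
lemma BJaux_core {α : Type*} [MeasurableSpace α] (μ : Measure α) [IsFiniteMeasure μ]
    (u v r : α → ℝ) (hu : Measurable u) (hv : Measurable v) (hr : Measurable r)
    (hrint : Integrable r μ)
    (hae : ∀ᵐ p ∂μ, 0 < r p ∧ Real.log (r p) = u p + v p)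
    (hmain : ∀ n : ℕ, ∫ p, (max (-(n : ℝ)) (min (n : ℝ) (u p))
        + max (-(n : ℝ)) (min (n : ℝ) (v p))) * (r p - 1) ∂μ = 0) :
    r =ᵐ[μ] 1 := by
  set F : ℕ → α → ℝ := fun n p =>
    (max (-(n : ℝ)) (min (n : ℝ) (u p)) + max (-(n : ℝ)) (min (n : ℝ) (v p))) * (r p - 1)
    with hF
  set G : α → ℝ := fun p => Real.log (r p) * (r p - 1) with hG
  have hFm : ∀ n, Measurable (F n) := fun n =>
    ((measurable_const.max (measurable_const.min hu)).add
      (measurable_const.max (measurable_const.min hv))).mul (hr.sub measurable_const)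
  have hGm : Measurable G := (Real.measurable_log.comp hr).mul (hr.sub measurable_const)
  have hsign : ∀ᵐ p ∂μ, ∀ n : ℕ, 0 ≤ F n p := by
    filter_upwards [hae] with p hp
    intro n
    obtain ⟨hpos, hlog⟩ := hp
    simp only [hF]
    rcases le_total 1 (r p) with h1 | h1
    · have h2 : 0 ≤ u p + v p := by rw [← hlog]; exact Real.log_nonneg h1
      exact mul_nonneg (BJaux_cl_add_nonneg (Nat.cast_nonneg n) h2) (by linarith)
    · have h2 : u p + v p ≤ 0 := by rw [← hlog]; exact Real.log_nonpos hpos.le h1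
      exact BJaux_mul_nonneg_of_nonpos (BJaux_cl_add_nonpos (Nat.cast_nonneg n) h2)
        (by linarith)
  have hGsign : ∀ᵐ p ∂μ, 0 ≤ G p := by
    filter_upwards [hae] with p hp
    obtain ⟨hpos, _⟩ := hp
    simp only [hG]
    rcases le_total 1 (r p) with h1 | h1
    · exact mul_nonneg (Real.log_nonneg h1) (by linarith)
    · exact BJaux_mul_nonneg_of_nonpos (Real.log_nonpos hpos.le h1) (by linarith)
  have htendsto : ∀ᵐ p ∂μ,
      Filter.Tendsto (fun n : ℕ => F n p) Filter.atTop (nhds (G p)) := by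
    filter_upwards [hae] with p hp
    obtain ⟨hpos, hlog⟩ := hp
    obtain ⟨N, hN⟩ := exists_nat_ge (max |u p| |v p|)
    have hev : (fun n : ℕ => F n p) =ᶠ[Filter.atTop] (fun _ => G p) := by
      filter_upwards [Filter.eventually_ge_atTop N] with n hn
      have hn' : max |u p| |v p| ≤ (n : ℝ) := le_trans hN (Nat.cast_le.mpr hn)
      have hu' : |u p| ≤ (n : ℝ) := le_trans (le_max_left _ _) hn'
      have hv' : |v p| ≤ (n : ℝ) := le_trans (le_max_right _ _) hn'
      simp only [hF, hG]
      rw [min_eq_right (abs_le.mp hu').2, max_eq_right (abs_le.mp hu').1,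
        min_eq_right (abs_le.mp hv').2, max_eq_right (abs_le.mp hv').1, ← hlog]
    exact Filter.Tendsto.congr' hev.symm tendsto_const_nhds
  have hFint : ∀ n, Integrable (F n) μ := by
    intro n
    refine (hrint.sub (integrable_const 1)).bdd_mul
      ((measurable_const.max (measurable_const.min hu)).add
        (measurable_const.max (measurable_const.min hv))).aestronglyMeasurable
      (c := 2 * n) (Filter.Eventually.of_forall fun p => ?_)
    have b1 : |max (-(n : ℝ)) (min (n : ℝ) (u p))| ≤ n :=
      abs_le.mpr ⟨le_max_left _ _,
        max_le (by linarith [Nat.cast_nonneg (α := ℝ) n]) (min_le_left _ _)⟩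
    have b2 : |max (-(n : ℝ)) (min (n : ℝ) (v p))| ≤ n :=
      abs_le.mpr ⟨le_max_left _ _,
        max_le (by linarith [Nat.cast_nonneg (α := ℝ) n]) (min_le_left _ _)⟩
    calc ‖max (-(n : ℝ)) (min (n : ℝ) (u p)) + max (-(n : ℝ)) (min (n : ℝ) (v p))‖
        ≤ |max (-(n : ℝ)) (min (n : ℝ) (u p))| + |max (-(n : ℝ)) (min (n : ℝ) (v p))| :=
          abs_add_le _ _
      _ ≤ 2 * n := by linarith
  have hzero : ∀ n : ℕ, ∫⁻ p, ENNReal.ofReal (F n p) ∂μ = 0 := by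
    intro n
    rw [← ofReal_integral_eq_lintegral_ofReal (hFint n)
      (hsign.mono fun p hp => hp n), hmain n, ENNReal.ofReal_zero]
  have hlim : ∫⁻ p, ENNReal.ofReal (G p) ∂μ = 0 := by
    have h1 : ∫⁻ p, ENNReal.ofReal (G p) ∂μ
        = ∫⁻ p, Filter.liminf (fun n : ℕ => ENNReal.ofReal (F n p)) Filter.atTop ∂μ := by
      refine lintegral_congr_ae (htendsto.mono fun p hp => ?_)
      exact (((ENNReal.continuous_ofReal.tendsto _).comp hp).liminf_eq).symm
    have h2 := lintegral_liminf_le (fun n => ENNReal.measurable_ofReal.comp (hFm n))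
      (μ := μ) (u := Filter.atTop)
    simp only [Function.comp_def] at h2
    have h3 : (fun n : ℕ => ∫⁻ p, ENNReal.ofReal (F n p) ∂μ) = fun _ => 0 := funext hzero
    rw [h3, Filter.liminf_const] at h2
    rw [h1]
    exact le_antisymm h2 (zero_le)
  have hG0 : ∀ᵐ p ∂μ, G p = 0 := by
    have h3 := (lintegral_eq_zero_iff (ENNReal.measurable_ofReal.comp hGm)).mp hlim
    filter_upwards [h3, hGsign] with p hp1 hp2
    have h4 : ENNReal.ofReal (G p) = 0 := hp1
    have h5 : G p ≤ 0 := ENNReal.ofReal_eq_zero.mp h4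
    linarith
  filter_upwards [hG0, hae] with p hp0 hp
  obtain ⟨hpos, _⟩ := hp
  simp only [hG] at hp0
  simp only [Pi.one_apply]
  rcases mul_eq_zero.mp hp0 with h | h
  · rcases Real.log_eq_zero.mp h with h' | h' | h'
    · exact absurd h' hpos.ne'
    · exact h'
    · linarith
  · linarith

/-- **Beurling–Jamison uniqueness** (Proposition 2, uniqueness part). -/
theorem stmt_1 (m : ℕ) (hm : 1 ≤ m)
    (μ0 μT : Measure (Fin m → ℝ))
    [IsProbabilityMeasure μ0] [IsProbabilityMeasure μT]
    (q : (Fin m → ℝ) × (Fin m → ℝ) → ℝ)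
    (hqc : Continuous q) (hqb : ∃ C, ∀ p, q p ≤ C) (hqpos : ∀ p, 0 < q p)
    (ν0 νT ν0' νT' : Measure (Fin m → ℝ))
    [SigmaFinite ν0] [SigmaFinite νT] [SigmaFinite ν0'] [SigmaFinite νT']
    (h0 : ((ν0.prod νT).withDensity (fun p => ENNReal.ofReal (q p))).map Prod.fst = μ0)
    (hT : ((ν0.prod νT).withDensity (fun p => ENNReal.ofReal (q p))).map Prod.snd = μT)
    (h0' : ((ν0'.prod νT').withDensity (fun p => ENNReal.ofReal (q p))).map Prod.fst = μ0)
    (hT' : ((ν0'.prod νT').withDensity (fun p => ENNReal.ofReal (q p))).map Prod.snd = μT) :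
    (ν0.prod νT).withDensity (fun p => ENNReal.ofReal (q p))
      = (ν0'.prod νT').withDensity (fun p => ENNReal.ofReal (q p)) := by
  classical
  set Q : (Fin m → ℝ) × (Fin m → ℝ) → ℝ≥0∞ := fun p => ENNReal.ofReal (q p) with hQdef
  have hQm : Measurable Q := ENNReal.measurable_ofReal.comp hqc.measurable
  have hQpos : ∀ p, 0 < Q p := fun p => ENNReal.ofReal_pos.mpr (hqpos p)
  set μ := (ν0.prod νT).withDensity Q with hμdef
  set μ' := (ν0'.prod νT').withDensity Q with hμ'def
  -- μ and μ' are probability measures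
  have hμuniv : μ Set.univ = 1 := by
    have h := congrArg (fun ρ : Measure _ => ρ Set.univ) h0
    simp only [Measure.map_apply measurable_fst MeasurableSet.univ, Set.preimage_univ] at h
    rw [h]; exact measure_univ
  have hμ'univ : μ' Set.univ = 1 := by
    have h := congrArg (fun ρ : Measure _ => ρ Set.univ) h0'
    simp only [Measure.map_apply measurable_fst MeasurableSet.univ, Set.preimage_univ] at h
    rw [h]; exact measure_univ
  have hμprob : IsProbabilityMeasure μ := ⟨hμuniv⟩
  -- the factor measures are nonzero
  have hνT0 : νT ≠ 0 := by
    intro h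
    rw [hμdef, h, Measure.prod_zero, withDensity_apply _ MeasurableSet.univ,
      Measure.restrict_zero, lintegral_zero_measure] at hμuniv
    exact zero_ne_one hμuniv
  have hν00 : ν0 ≠ 0 := by
    intro h
    rw [hμdef, h, Measure.zero_prod, withDensity_apply _ MeasurableSet.univ,
      Measure.restrict_zero, lintegral_zero_measure] at hμuniv
    exact zero_ne_one hμuniv
  have hνT'0 : νT' ≠ 0 := by
    intro h
    rw [hμ'def, h, Measure.prod_zero, withDensity_apply _ MeasurableSet.univ,
      Measure.restrict_zero, lintegral_zero_measure] at hμ'univ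
    exact zero_ne_one hμ'univ
  have hν0'0 : ν0' ≠ 0 := by
    intro h
    rw [hμ'def, h, Measure.zero_prod, withDensity_apply _ MeasurableSet.univ,
      Measure.restrict_zero, lintegral_zero_measure] at hμ'univ
    exact zero_ne_one hμ'univ
  -- marginal densities
  have hpossupp : ∀ (τ : Measure (Fin m → ℝ)), τ ≠ 0 →
      ∀ g : (Fin m → ℝ) → ℝ≥0∞, Measurable g → (∀ y, 0 < g y) → 0 < ∫⁻ y, g y ∂τ := by
    intro τ hτ g hg hgpos
    rw [lintegral_pos_iff_support hg]
    have h1 : Function.support g = Set.univ := Set.eq_univ_of_forall fun y => (hgpos y).ne'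
    rw [h1]
    exact Measure.measure_univ_pos.mpr hτ
  have hmarg : ∀ (ρ τ : Measure (Fin m → ℝ)), ∀ (_ : SigmaFinite ρ) (_ : SigmaFinite τ),
      τ ≠ 0 → ∀ (κ0 : Measure (Fin m → ℝ)),
      ((ρ.prod τ).withDensity Q).map Prod.fst = κ0 → ρ ≪ κ0 ∧ κ0 ≪ ρ := by
    intro ρ τ hρsf hτsf hτ κ0 hκ
    rw [BJaux_map_fst ρ τ hQm] at hκ
    have hfm : Measurable fun x => ∫⁻ y, Q (x, y) ∂τ := hQm.lintegral_prod_right'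
    have hfpos : ∀ x, 0 < ∫⁻ y, Q (x, y) ∂τ := fun x =>
      hpossupp τ hτ _ (hQm.comp (measurable_prodMk_left)) (fun y => hQpos (x, y))
    exact ⟨hκ ▸ BJaux_absCont ρ hfm hfpos, hκ ▸ withDensity_absolutelyContinuous ρ _⟩
  have hmargsnd : ∀ (ρ τ : Measure (Fin m → ℝ)), ∀ (_ : SigmaFinite ρ) (_ : SigmaFinite τ),
      ρ ≠ 0 → ∀ (κT : Measure (Fin m → ℝ)),
      ((ρ.prod τ).withDensity Q).map Prod.snd = κT → τ ≪ κT ∧ κT ≪ τ := by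
    intro ρ τ hρsf hτsf hρ κT hκ
    rw [BJaux_map_snd ρ τ hQm] at hκ
    have hfm : Measurable fun y => ∫⁻ x, Q (x, y) ∂ρ := hQm.lintegral_prod_left'
    have hfpos : ∀ y, 0 < ∫⁻ x, Q (x, y) ∂ρ := fun y =>
      hpossupp ρ hρ _ (hQm.comp (measurable_prodMk_right)) (fun x => hQpos (x, y))
    exact ⟨hκ ▸ BJaux_absCont τ hfm hfpos, hκ ▸ withDensity_absolutelyContinuous τ _⟩
  obtain ⟨hν0μ0, hμ0ν0⟩ := hmarg ν0 νT ‹_› ‹_› hνT0 μ0 h0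
  obtain ⟨hν0'μ0, hμ0ν0'⟩ := hmarg ν0' νT' ‹_› ‹_› hνT'0 μ0 h0'
  obtain ⟨hνTμT, hμTνT⟩ := hmargsnd ν0 νT ‹_› ‹_› hν00 μT hT
  obtain ⟨hνT'μT, hμTνT'⟩ := hmargsnd ν0' νT' ‹_› ‹_› hν0'0 μT hT'
  have hac0 : ν0' ≪ ν0 := hν0'μ0.trans hμ0ν0
  have hacT : νT' ≪ νT := hνT'μT.trans hμTνT
  -- Radon-Nikodym derivatives
  set a := ν0'.rnDeriv ν0 with hadef
  set b := νT'.rnDeriv νT with hbdef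
  have ham : Measurable a := Measure.measurable_rnDeriv _ _
  have hbm : Measurable b := Measure.measurable_rnDeriv _ _
  have hwd0 : ν0.withDensity a = ν0' := Measure.withDensity_rnDeriv_eq _ _ hac0
  have hwdT : νT.withDensity b = νT' := Measure.withDensity_rnDeriv_eq _ _ hacT
  set H : (Fin m → ℝ) × (Fin m → ℝ) → ℝ≥0∞ := fun p => a p.1 * b p.2 with hHdef
  have hHm : Measurable H := (ham.comp measurable_fst).mul (hbm.comp measurable_snd)
  have hprodH : (ν0.prod νT).withDensity H = ν0'.prod νT' := by
    refine (Measure.prod_eq fun s t hs ht => ?_).symm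
    rw [withDensity_apply _ (hs.prod ht), ← Measure.prod_restrict,
      lintegral_prod_mul ham.aemeasurable hbm.aemeasurable,
      ← withDensity_apply _ hs, ← withDensity_apply _ ht, hwd0, hwdT]
  have hμ'H : μ' = μ.withDensity H := by
    rw [hμ'def, ← hprodH, ← withDensity_mul _ hHm hQm, mul_comm,
      withDensity_mul _ hQm hHm, ← hμdef]
  -- a.e. positivity and finiteness of the density H
  have ha1 : ∀ᵐ x ∂μ0, 0 < a x := hμ0ν0'.ae_le (Measure.rnDeriv_pos hac0)
  have ha2 : ∀ᵐ x ∂μ0, a x < ⊤ := hμ0ν0.ae_le (Measure.rnDeriv_lt_top _ _)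
  have hb1 : ∀ᵐ y ∂μT, 0 < b y := hμTνT'.ae_le (Measure.rnDeriv_pos hacT)
  have hb2 : ∀ᵐ y ∂μT, b y < ⊤ := hμTνT.ae_le (Measure.rnDeriv_lt_top _ _)
  have ha_ae : ∀ᵐ x ∂μ0, 0 < a x ∧ a x < ⊤ := ha1.and ha2
  have hb_ae : ∀ᵐ y ∂μT, 0 < b y ∧ b y < ⊤ := hb1.and hb2
  have haμ : ∀ᵐ p ∂μ, 0 < a p.1 ∧ a p.1 < ⊤ := by
    rw [← h0] at ha_ae
    exact ae_of_ae_map measurable_fst.aemeasurable ha_ae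
  have hbμ : ∀ᵐ p ∂μ, 0 < b p.2 ∧ b p.2 < ⊤ := by
    rw [← hT] at hb_ae
    exact ae_of_ae_map measurable_snd.aemeasurable hb_ae
  have hHae : ∀ᵐ p ∂μ, 0 < H p ∧ H p < ⊤ := by
    filter_upwards [haμ, hbμ] with p hp1 hp2
    exact ⟨ENNReal.mul_pos hp1.1.ne' hp2.1.ne', ENNReal.mul_lt_top hp1.2 hp2.2⟩
  -- the real density
  have hHint : ∫⁻ p, H p ∂μ = 1 := by
    have h := hμ'univ
    rwa [hμ'H, withDensity_apply _ MeasurableSet.univ, Measure.restrict_univ] at h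
  have hrint : Integrable (fun p => (H p).toReal) μ :=
    integrable_toReal_of_lintegral_ne_top hHm.aemeasurable (by rw [hHint]; exact ENNReal.one_ne_top)
  -- transfer of test functions through equal marginals
  have key_fst : ∀ g : (Fin m → ℝ) → ℝ, Measurable g →
      ∫ p, g p.1 ∂μ' = ∫ p, g p.1 ∂μ := by
    intro g hg
    rw [← integral_map measurable_fst.aemeasurable hg.aestronglyMeasurable,
      ← integral_map measurable_fst.aemeasurable hg.aestronglyMeasurable, h0, h0']
  have key_snd : ∀ g : (Fin m → ℝ) → ℝ, Measurable g →
      ∫ p, g p.2 ∂μ' = ∫ p, g p.2 ∂μ := by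
    intro g hg
    rw [← integral_map measurable_snd.aemeasurable hg.aestronglyMeasurable,
      ← integral_map measurable_snd.aemeasurable hg.aestronglyMeasurable, hT, hT']
  -- integration against μ' equals integration of H • against μ
  set H' : (Fin m → ℝ) × (Fin m → ℝ) → ℝ≥0 := fun p => (H p).toNNReal with hH'def
  have hH'm : Measurable H' := hHm.ennreal_toNNReal
  have hμ'H' : μ' = μ.withDensity (fun p => (H' p : ℝ≥0∞)) := by
    rw [hμ'H]
    exact withDensity_congr_ae (hHae.mono fun p hp => (ENNReal.coe_toNNReal hp.2.ne).symm)
  have key2 : ∀ g : (Fin m → ℝ) × (Fin m → ℝ) → ℝ,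
      ∫ p, g p ∂μ' = ∫ p, (H p).toReal * g p ∂μ := by
    intro g
    rw [hμ'H', integral_withDensity_eq_integral_smul hH'm]
    rfl
  -- zero-integral identities for bounded test functions of each coordinate
  have key3 : ∀ φ : (Fin m → ℝ) → ℝ, Measurable φ → ∀ c : ℝ, (∀ x, |φ x| ≤ c) →
      ∫ p, φ p.1 * ((H p).toReal - 1) ∂μ = 0 := by
    intro φ hφ c hc
    have hm1 : AEStronglyMeasurable (fun p : (Fin m → ℝ) × (Fin m → ℝ) => φ p.1) μ :=
      (hφ.comp measurable_fst).aestronglyMeasurable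
    have hbd : ∃ C, ∀ p : (Fin m → ℝ) × (Fin m → ℝ), ‖φ p.1‖ ≤ C :=
      ⟨c, fun p => by simpa [Real.norm_eq_abs] using hc p.1⟩
    have i2 : Integrable (fun p => φ p.1 * (H p).toReal) μ := hrint.bdd_mul hm1 (Filter.Eventually.of_forall hbd.choose_spec)
    have i1 : Integrable (fun p : (Fin m → ℝ) × (Fin m → ℝ) => φ p.1) μ := by
      have h := (integrable_const (1 : ℝ)).bdd_mul hm1 (Filter.Eventually.of_forall hbd.choose_spec)
      simpa using h
    have e1 : ∫ p, φ p.1 * (H p).toReal ∂μ = ∫ p, φ p.1 ∂μ := by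
      have h1 := key2 (fun p => φ p.1)
      rw [key_fst φ hφ] at h1
      rw [h1]
      exact integral_congr_ae (Filter.Eventually.of_forall fun p => mul_comm _ _)
    simp only [mul_sub, mul_one]
    rw [integral_sub i2 i1, e1, sub_self]
  have key3' : ∀ ψ : (Fin m → ℝ) → ℝ, Measurable ψ → ∀ c : ℝ, (∀ x, |ψ x| ≤ c) →
      ∫ p, ψ p.2 * ((H p).toReal - 1) ∂μ = 0 := by
    intro ψ hψ c hc
    have hm1 : AEStronglyMeasurable (fun p : (Fin m → ℝ) × (Fin m → ℝ) => ψ p.2) μ :=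
      (hψ.comp measurable_snd).aestronglyMeasurable
    have hbd : ∃ C, ∀ p : (Fin m → ℝ) × (Fin m → ℝ), ‖ψ p.2‖ ≤ C :=
      ⟨c, fun p => by simpa [Real.norm_eq_abs] using hc p.2⟩
    have i2 : Integrable (fun p => ψ p.2 * (H p).toReal) μ := hrint.bdd_mul hm1 (Filter.Eventually.of_forall hbd.choose_spec)
    have i1 : Integrable (fun p : (Fin m → ℝ) × (Fin m → ℝ) => ψ p.2) μ := by
      have h := (integrable_const (1 : ℝ)).bdd_mul hm1 (Filter.Eventually.of_forall hbd.choose_spec)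
      simpa using h
    have e1 : ∫ p, ψ p.2 * (H p).toReal ∂μ = ∫ p, ψ p.2 ∂μ := by
      have h1 := key2 (fun p => ψ p.2)
      rw [key_snd ψ hψ] at h1
      rw [h1]
      exact integral_congr_ae (Filter.Eventually.of_forall fun p => mul_comm _ _)
    simp only [mul_sub, mul_one]
    rw [integral_sub i2 i1, e1, sub_self]
  -- apply the core entropy argument
  have hr1 : (fun p => (H p).toReal) =ᵐ[μ] 1 := by
    refine BJaux_core μ (fun p => Real.log (a p.1).toReal)
      (fun p => Real.log (b p.2).toReal) (fun p => (H p).toReal)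
      (Real.measurable_log.comp (ham.ennreal_toReal.comp measurable_fst))
      (Real.measurable_log.comp (hbm.ennreal_toReal.comp measurable_snd))
      hHm.ennreal_toReal hrint ?_ ?_
    · filter_upwards [haμ, hbμ] with p hpa hpb
      have hα : 0 < (a p.1).toReal := ENNReal.toReal_pos hpa.1.ne' hpa.2.ne
      have hβ : 0 < (b p.2).toReal := ENNReal.toReal_pos hpb.1.ne' hpb.2.ne
      have hrval : (H p).toReal = (a p.1).toReal * (b p.2).toReal := by
        simp only [hHdef]
        exact ENNReal.toReal_mul
      constructor
      · rw [hrval]; exact mul_pos hα hβ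
      · rw [hrval]; exact Real.log_mul hα.ne' hβ.ne'
    · intro n
      have hφm : Measurable fun x : Fin m → ℝ =>
          max (-(n : ℝ)) (min (n : ℝ) (Real.log (a x).toReal)) :=
        measurable_const.max
          (measurable_const.min (Real.measurable_log.comp ham.ennreal_toReal))
      have hψm : Measurable fun x : Fin m → ℝ =>
          max (-(n : ℝ)) (min (n : ℝ) (Real.log (b x).toReal)) :=
        measurable_const.max
          (measurable_const.min (Real.measurable_log.comp hbm.ennreal_toReal))
      have hφb : ∀ x, |max (-(n : ℝ)) (min (n : ℝ) (Real.log (a x).toReal))| ≤ n := fun x =>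
        abs_le.mpr ⟨le_max_left _ _,
          max_le (by linarith [Nat.cast_nonneg (α := ℝ) n]) (min_le_left _ _)⟩
      have hψb : ∀ x, |max (-(n : ℝ)) (min (n : ℝ) (Real.log (b x).toReal))| ≤ n := fun x =>
        abs_le.mpr ⟨le_max_left _ _,
          max_le (by linarith [Nat.cast_nonneg (α := ℝ) n]) (min_le_left _ _)⟩
      have iφ : Integrable
          (fun p => max (-(n : ℝ)) (min (n : ℝ) (Real.log (a p.1).toReal))
            * ((H p).toReal - 1)) μ :=
        (hrint.sub (integrable_const 1)).bdd_mul
          ((hφm.comp measurable_fst).aestronglyMeasurable)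
          (c := n) (Filter.Eventually.of_forall fun p => by simpa [Real.norm_eq_abs] using hφb p.1)
      have iψ : Integrable
          (fun p => max (-(n : ℝ)) (min (n : ℝ) (Real.log (b p.2).toReal))
            * ((H p).toReal - 1)) μ :=
        (hrint.sub (integrable_const 1)).bdd_mul
          ((hψm.comp measurable_snd).aestronglyMeasurable)
          (c := n) (Filter.Eventually.of_forall fun p => by simpa [Real.norm_eq_abs] using hψb p.2)
      have hsplit : ∫ p, (max (-(n : ℝ)) (min (n : ℝ) (Real.log (a p.1).toReal))
            + max (-(n : ℝ)) (min (n : ℝ) (Real.log (b p.2).toReal)))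
            * ((H p).toReal - 1) ∂μ
          = ∫ p, max (-(n : ℝ)) (min (n : ℝ) (Real.log (a p.1).toReal))
              * ((H p).toReal - 1) ∂μ
            + ∫ p, max (-(n : ℝ)) (min (n : ℝ) (Real.log (b p.2).toReal))
              * ((H p).toReal - 1) ∂μ := by
        rw [← integral_add iφ iψ]
        exact integral_congr_ae (Filter.Eventually.of_forall fun p => by ring)
      rw [hsplit, key3 _ hφm n (hφb), key3' _ hψm n (hψb), add_zero]
  -- conclude
  have hH1 : H =ᵐ[μ] 1 := by
    filter_upwards [hr1, hHae] with p hp1 hp2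
    simp only [Pi.one_apply] at hp1 ⊢
    exact (ENNReal.toReal_eq_one_iff _).mp hp1
  have hfin : μ.withDensity H = μ := by rw [withDensity_congr_ae hH1, withDensity_one]
  rw [hμ'H, hfin]
end

section
/- Let m ≥ 1 and let λ denote Lebesgue measure on ℝ^m. Let q : ℝ^m × ℝ^m → ℝ be continuous and strictly positive, let μ0 be a compactly supported Borel probability measure on ℝ^m, and let μT be a Borel probability measure on ℝ^m with μT ≪ λ. Let ν0, νT be σ-finite Borel measures on ℝ^m such that the measure on ℝ^m × ℝ^m with density q with respect to ν0 ⊗ νT has first marginal μ0 and second marginal μT. Assume the function h0(x) := ∫ q(x,y) dνT(y) is finite for every x and continuous on ℝ^m, and assume H(μT | S_q μ0) < +∞. Then H(μT | S_q ν0) < +∞ and ∫ (dμ0/dν0)(x) dμ0(x) < +∞. -/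
open MeasureTheory
open scoped Classical ENNReal

/-- The relative entropy `H(μ | ν) = ∫ log(dμ/dν) dμ` when `μ ≪ ν` (and the integral
is defined), and `+∞` otherwise. -/
noncomputable def relEntropy {Ω : Type*} [MeasurableSpace Ω] (μ ν : Measure Ω) : EReal :=
  if μ ≪ ν ∧ Integrable (fun x => Real.log ((μ.rnDeriv ν x).toReal)) μ then
    ((∫ x, Real.log ((μ.rnDeriv ν x).toReal) ∂μ : ℝ) : EReal)
  else ⊤

/-- `S_q θ` : the measure on `ℝ^m` with density `y ↦ ∫ q(x,y) dθ(x)` with respect to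
Lebesgue measure. -/
noncomputable def Sq (m : ℕ) (q : (Fin m → ℝ) × (Fin m → ℝ) → ℝ)
    (θ : Measure (Fin m → ℝ)) : Measure (Fin m → ℝ) :=
  MeasureTheory.volume.withDensity fun y => ∫⁻ x, ENNReal.ofReal (q (x, y)) ∂θ

/-- First marginal of a measure with density on a product. -/
lemma marginal_fst_aux {α β : Type*} [MeasurableSpace α] [MeasurableSpace β]
    (μ : Measure α) (ν : Measure β) [SigmaFinite μ] [SigmaFinite ν]
    {w : α × β → ℝ≥0∞} (hw : Measurable w) :
    ((μ.prod ν).withDensity w).map Prod.fst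
      = μ.withDensity (fun x => ∫⁻ y, w (x, y) ∂ν) := by
  ext E hE
  rw [Measure.map_apply measurable_fst hE,
    withDensity_apply _ (hE.preimage measurable_fst), withDensity_apply _ hE]
  have hpre : Prod.fst ⁻¹' E = E ×ˢ (Set.univ : Set β) := by
    ext p; simp
  rw [hpre, ← Measure.restrict_prod_eq_prod_univ,
    MeasureTheory.lintegral_prod _ hw.aemeasurable]

/-- **Lemma 1** of the paper. -/
theorem stmt_6 (m : ℕ) (hm : 1 ≤ m)
    (q : (Fin m → ℝ) × (Fin m → ℝ) → ℝ)
    (hqc : Continuous q) (hqpos : ∀ p, 0 < q p)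
    (μ0 μT : Measure (Fin m → ℝ))
    [IsProbabilityMeasure μ0] [IsProbabilityMeasure μT]
    (K : Set (Fin m → ℝ)) (hK : IsCompact K) (hμ0K : μ0 Kᶜ = 0)
    (hμTac : μT ≪ MeasureTheory.volume)
    (ν0 νT : Measure (Fin m → ℝ)) [SigmaFinite ν0] [SigmaFinite νT]
    (hfst : ((ν0.prod νT).withDensity (fun p => ENNReal.ofReal (q p))).map Prod.fst = μ0)
    (hsnd : ((ν0.prod νT).withDensity (fun p => ENNReal.ofReal (q p))).map Prod.snd = μT)
    (hfin : ∀ x, ∫⁻ y, ENNReal.ofReal (q (x, y)) ∂νT < ⊤)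
    (hcont : Continuous fun x => (∫⁻ y, ENNReal.ofReal (q (x, y)) ∂νT).toReal)
    (hH : relEntropy μT (Sq m q μ0) < ⊤) :
    relEntropy μT (Sq m q ν0) < ⊤ ∧ ∫⁻ x, μ0.rnDeriv ν0 x ∂μ0 < ⊤ := by
  have hQm : Measurable fun p : (Fin m → ℝ) × (Fin m → ℝ) => ENNReal.ofReal (q p) :=
    ENNReal.measurable_ofReal.comp hqc.measurable
  have hQx : ∀ x, Measurable (fun y => ENNReal.ofReal (q (x, y))) := fun x =>
    hQm.comp measurable_prodMk_left
  have hQy : ∀ y, Measurable (fun x => ENNReal.ofReal (q (x, y))) := fun y =>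
    hQm.comp measurable_prodMk_right
  set h0 : (Fin m → ℝ) → ℝ≥0∞ := fun x => ∫⁻ y, ENNReal.ofReal (q (x, y)) ∂νT with hh0def
  have hh0m : Measurable h0 := hQm.lintegral_prod_right'
  -- μ0 is ν0 with density h0
  have hμ0eq : μ0 = ν0.withDensity h0 := by
    rw [← hfst, marginal_fst_aux _ _ hQm]
  -- νT and ν0 are nonzero
  have hνT0 : νT ≠ 0 := by
    intro h
    have h1 : μ0 Set.univ = 0 := by
      rw [← hfst, h, Measure.prod_zero,
        Measure.map_apply measurable_fst MeasurableSet.univ,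
        withDensity_apply _ (MeasurableSet.univ.preimage measurable_fst)]
      simp
    simp [measure_univ] at h1
  have hν00 : ν0 ≠ 0 := by
    intro h
    have h1 : μ0 Set.univ = 0 := by
      rw [← hfst, h, Measure.zero_prod,
        Measure.map_apply measurable_fst MeasurableSet.univ,
        withDensity_apply _ (MeasurableSet.univ.preimage measurable_fst)]
      simp
    simp [measure_univ] at h1
  -- positivity of h0
  have hh0pos : ∀ x, 0 < h0 x := by
    intro x
    show 0 < ∫⁻ y, ENNReal.ofReal (q (x, y)) ∂νT
    rw [lintegral_pos_iff_support (hQx x)]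
    have hsupp : (Function.support fun y => ENNReal.ofReal (q (x, y))) = Set.univ :=
      Set.eq_univ_of_forall fun y => (ENNReal.ofReal_pos.2 (hqpos _)).ne'
    rw [hsupp]
    exact Measure.measure_univ_pos.mpr hνT0
  -- ν0 vanishes outside K
  have hKm : MeasurableSet K := hK.measurableSet
  have hν0K : ν0 Kᶜ = 0 := by
    have h1 : ∫⁻ x in Kᶜ, h0 x ∂ν0 = 0 := by
      have := hμ0K
      rwa [hμ0eq, withDensity_apply _ hKm.compl] at this
    rw [lintegral_eq_zero_iff hh0m] at h1
    have h2 := ae_iff.mp h1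
    have h3 : {x | ¬ h0 x = (0 : (Fin m → ℝ) → ℝ≥0∞) x} = Set.univ :=
      Set.eq_univ_of_forall fun x => (hh0pos x).ne'
    rw [h3] at h2
    simpa using h2
  have haeK : ∀ᵐ x ∂ν0, x ∈ K := by
    rw [ae_iff]
    exact hν0K
  have haeKμ0 : ∀ᵐ x ∂μ0, x ∈ K := by
    rw [ae_iff]
    exact hμ0K
  -- K is nonempty
  have hKne : K.Nonempty := by
    rcases Set.eq_empty_or_nonempty K with h | h
    · exfalso
      have : μ0 Set.univ = 0 := by
        rw [← Set.compl_empty, ← h]; exact hμ0K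
      simp [measure_univ] at this
    · exact h
  -- min and max of h0.toReal on K
  obtain ⟨xc, hxcK, hxcmin⟩ := hK.exists_isMinOn hKne hcont.continuousOn
  obtain ⟨xC, hxCK, hxCmax⟩ := hK.exists_isMaxOn hKne hcont.continuousOn
  set c : ℝ := (h0 xc).toReal with hcdef
  set C : ℝ := (h0 xC).toReal with hCdef
  have hc : 0 < c := ENNReal.toReal_pos (hh0pos xc).ne' (hfin xc).ne
  have hC : 0 < C := ENNReal.toReal_pos (hh0pos xC).ne' (hfin xC).ne
  have hbd : ∀ x ∈ K, ENNReal.ofReal c ≤ h0 x ∧ h0 x ≤ ENNReal.ofReal C := by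
    intro x hx
    have hx1 : h0 x = ENNReal.ofReal ((h0 x).toReal) :=
      (ENNReal.ofReal_toReal (hfin x).ne).symm
    constructor
    · rw [hx1]; exact ENNReal.ofReal_le_ofReal (hxcmin hx)
    · rw [hx1]; exact ENNReal.ofReal_le_ofReal (hxCmax hx)
  -- the densities f and g
  set f : (Fin m → ℝ) → ℝ≥0∞ := fun y => ∫⁻ x, ENNReal.ofReal (q (x, y)) ∂ν0 with hfdef
  set g : (Fin m → ℝ) → ℝ≥0∞ := fun y => ∫⁻ x, ENNReal.ofReal (q (x, y)) ∂μ0 with hgdef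
  have hfm : Measurable f := hQm.lintegral_prod_left'
  have hgm : Measurable g := hQm.lintegral_prod_left'
  have hSν0 : Sq m q ν0 = volume.withDensity f := rfl
  have hSμ0 : Sq m q μ0 = volume.withDensity g := rfl
  have hfpos : ∀ y, 0 < f y := by
    intro y
    show 0 < ∫⁻ x, ENNReal.ofReal (q (x, y)) ∂ν0
    rw [lintegral_pos_iff_support (hQy y)]
    have hsupp : (Function.support fun x => ENNReal.ofReal (q (x, y))) = Set.univ :=
      Set.eq_univ_of_forall fun x => (ENNReal.ofReal_pos.2 (hqpos _)).ne'
    rw [hsupp]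
    exact Measure.measure_univ_pos.mpr hν00
  -- ν0 K is finite
  have hν0Kfin : ν0 K < ⊤ := by
    have h1 : ENNReal.ofReal c * ν0 K ≤ μ0 K := by
      rw [hμ0eq, withDensity_apply _ hKm]
      calc ENNReal.ofReal c * ν0 K = ∫⁻ _ in K, ENNReal.ofReal c ∂ν0 := by
            rw [setLIntegral_const]
          _ ≤ ∫⁻ x in K, h0 x ∂ν0 :=
            lintegral_mono_ae ((ae_restrict_mem hKm).mono fun x hx => (hbd x hx).1)
    have h2 : ENNReal.ofReal c * ν0 K ≤ 1 := h1.trans prob_le_one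
    by_contra hcon
    rw [not_lt, top_le_iff] at hcon
    rw [hcon, ENNReal.mul_top (by simpa using (ENNReal.ofReal_pos.2 hc).ne')] at h2
    simp at h2
  -- f is finite everywhere
  have hν0r : ν0.restrict K = ν0 := Measure.restrict_eq_self_of_ae_mem haeK
  have hffin : ∀ y, f y < ⊤ := by
    intro y
    have hqcy : Continuous (fun x => q (x, y)) :=
      hqc.comp (continuous_id.prodMk continuous_const)
    obtain ⟨xM, hxM, hmax⟩ := hK.exists_isMaxOn hKne hqcy.continuousOn
    have h1 : f y = ∫⁻ x in K, ENNReal.ofReal (q (x, y)) ∂ν0 := by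
      show (∫⁻ x, ENNReal.ofReal (q (x, y)) ∂ν0) = ∫⁻ x, ENNReal.ofReal (q (x, y)) ∂(ν0.restrict K)
      rw [hν0r]
    rw [h1]
    calc ∫⁻ x in K, ENNReal.ofReal (q (x, y)) ∂ν0
        ≤ ∫⁻ _ in K, ENNReal.ofReal (q (xM, y)) ∂ν0 :=
          lintegral_mono_ae ((ae_restrict_mem hKm).mono fun x hx =>
            ENNReal.ofReal_le_ofReal (hmax hx))
      _ = ENNReal.ofReal (q (xM, y)) * ν0 K := setLIntegral_const _ _
      _ < ⊤ := ENNReal.mul_lt_top ENNReal.ofReal_lt_top hν0Kfin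
  -- bounds relating g and f
  have hgf : ∀ y, g y = ∫⁻ x, h0 x * ENNReal.ofReal (q (x, y)) ∂ν0 := by
    intro y
    show (∫⁻ x, ENNReal.ofReal (q (x, y)) ∂μ0) = _
    rw [hμ0eq, lintegral_withDensity_eq_lintegral_mul _ hh0m (hQy y)]
    rfl
  have hgge : ∀ y, ENNReal.ofReal c * f y ≤ g y := by
    intro y
    rw [hgf y]
    show ENNReal.ofReal c * ∫⁻ x, ENNReal.ofReal (q (x, y)) ∂ν0 ≤ _
    rw [← lintegral_const_mul _ (hQy y)]
    refine lintegral_mono_ae (haeK.mono fun x hx => ?_)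
    exact mul_le_mul_left (hbd x hx).1 _
  have hgle : ∀ y, g y ≤ ENNReal.ofReal C * f y := by
    intro y
    rw [hgf y]
    show _ ≤ ENNReal.ofReal C * ∫⁻ x, ENNReal.ofReal (q (x, y)) ∂ν0
    rw [← lintegral_const_mul _ (hQy y)]
    refine lintegral_mono_ae (haeK.mono fun x hx => ?_)
    exact mul_le_mul_left (hbd x hx).2 _
  have hgfin : ∀ y, g y < ⊤ := fun y =>
    lt_of_le_of_lt (hgle y) (ENNReal.mul_lt_top ENNReal.ofReal_lt_top (hffin y))
  -- sigma-finiteness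
  haveI hsf : SigmaFinite (volume.withDensity f) :=
    SigmaFinite.withDensity_of_ne_top' fun y => (hffin y).ne
  haveI hsg : SigmaFinite (volume.withDensity g) :=
    SigmaFinite.withDensity_of_ne_top' fun y => (hgfin y).ne
  -- unfold hypothesis hH
  rw [relEntropy] at hH
  split_ifs at hH with hcond
  swap
  · exact absurd hH (lt_irrefl _)
  obtain ⟨hac, hint⟩ := hcond
  rw [hSμ0] at hac hint
  -- the relative density w = g / f
  set w : (Fin m → ℝ) → ℝ≥0∞ := fun y => g y / f y with hwdef
  have hwm : Measurable w := hgm.div hfm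
  have hSS : volume.withDensity g = (volume.withDensity f).withDensity w := by
    rw [← withDensity_mul _ hfm hwm]
    congr 1
    funext y
    exact (ENNReal.mul_div_cancel (hfpos y).ne' (hffin y).ne).symm
  have hac2 : (volume.withDensity g) ≪ (volume.withDensity f) := by
    rw [hSS]; exact withDensity_absolutelyContinuous _ _
  have hac' : μT ≪ volume.withDensity f := hac.trans hac2
  -- the Radon–Nikodym derivative of μT with respect to Sq ν0
  set ρ : (Fin m → ℝ) → ℝ≥0∞ := μT.rnDeriv (volume.withDensity g) with hρdef
  have hρm : Measurable ρ := Measure.measurable_rnDeriv _ _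
  have hμTeq : μT = (volume.withDensity g).withDensity ρ :=
    (Measure.withDensity_rnDeriv_eq _ _ hac).symm
  have hμT2 : μT = (volume.withDensity f).withDensity (w * ρ) := by
    rw [withDensity_mul _ hwm hρm, ← hSS]
    exact hμTeq
  have hrn : μT.rnDeriv (volume.withDensity f) =ᵐ[volume.withDensity f] (w * ρ) := by
    rw [hμT2]
    exact Measure.rnDeriv_withDensity _ (hwm.mul hρm)
  have hrnμT : μT.rnDeriv (volume.withDensity f) =ᵐ[μT] (w * ρ) :=
    hrn.filter_mono hac'.ae_le
  have hρpos : ∀ᵐ y ∂μT, 0 < ρ y := Measure.rnDeriv_pos hac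
  have hρfin : ∀ᵐ y ∂μT, ρ y < ⊤ :=
    (Measure.rnDeriv_lt_top μT _).filter_mono hac.ae_le
  -- bounds on w
  have hwlb : ∀ y, ENNReal.ofReal c ≤ w y := by
    intro y
    show ENNReal.ofReal c ≤ g y / f y
    rw [ENNReal.le_div_iff_mul_le (Or.inl (hfpos y).ne') (Or.inl (hffin y).ne)]
    exact hgge y
  have hwub : ∀ y, w y ≤ ENNReal.ofReal C := fun y =>
    ENNReal.div_le_of_le_mul (hgle y)
  have hwpos : ∀ y, 0 < w y := fun y =>
    lt_of_lt_of_le (ENNReal.ofReal_pos.2 hc) (hwlb y)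
  have hwfin : ∀ y, w y < ⊤ := fun y =>
    lt_of_le_of_lt (hwub y) ENNReal.ofReal_lt_top
  have hwtlb : ∀ y, c ≤ (w y).toReal := by
    intro y
    have := ENNReal.toReal_mono (hwfin y).ne (hwlb y)
    rwa [ENNReal.toReal_ofReal hc.le] at this
  have hwtub : ∀ y, (w y).toReal ≤ C := by
    intro y
    have := ENNReal.toReal_mono ENNReal.ofReal_ne_top (hwub y)
    rwa [ENNReal.toReal_ofReal hC.le] at this
  -- a.e. identity for the log of the density
  have hlog : ∀ᵐ y ∂μT, Real.log ((μT.rnDeriv (volume.withDensity f) y).toReal)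
      = Real.log ((ρ y).toReal) + Real.log ((w y).toReal) := by
    filter_upwards [hrnμT, hρpos, hρfin] with y h1 h2 h3
    rw [h1, Pi.mul_apply, ENNReal.toReal_mul, Real.log_mul, add_comm]
    · exact (ENNReal.toReal_pos (hwpos y).ne' (hwfin y).ne).ne'
    · exact (ENNReal.toReal_pos h2.ne' h3.ne).ne'
  -- integrability
  have hwlog_int : Integrable (fun y => Real.log ((w y).toReal)) μT := by
    refine (integrable_const (max |Real.log c| |Real.log C|)).mono'
      ((Real.measurable_log.comp hwm.ennreal_toReal).aestronglyMeasurable) ?_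
    refine ae_of_all _ fun y => ?_
    rw [Real.norm_eq_abs, abs_le]
    constructor
    · have h1 : Real.log c ≤ Real.log ((w y).toReal) :=
        Real.log_le_log hc (hwtlb y)
      have h2 : -|Real.log c| ≤ Real.log c := neg_abs_le _
      have h3 : -(max |Real.log c| |Real.log C|) ≤ -|Real.log c| := by
        simp [le_max_left]
      linarith
    · have h1 : Real.log ((w y).toReal) ≤ Real.log C :=
        Real.log_le_log (lt_of_lt_of_le hc (hwtlb y)) (hwtub y)
      have h2 : Real.log C ≤ |Real.log C| := le_abs_self _
      have h3 : |Real.log C| ≤ max |Real.log c| |Real.log C| := le_max_right _ _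
      linarith
  have hintegr : Integrable
      (fun y => Real.log ((μT.rnDeriv (volume.withDensity f) y).toReal)) μT :=
    (hint.add hwlog_int).congr (hlog.mono fun y hy => hy.symm)
  constructor
  · have hcond2 : μT ≪ Sq m q ν0 ∧
        Integrable (fun x => Real.log ((μT.rnDeriv (Sq m q ν0) x).toReal)) μT := by
      rw [hSν0]; exact ⟨hac', hintegr⟩
    rw [relEntropy, if_pos hcond2]
    exact EReal.coe_lt_top _
  · -- second conclusion
    have hμ0ac : μ0 ≪ ν0 := by
      rw [hμ0eq]; exact withDensity_absolutelyContinuous _ _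
    have hrn0 : μ0.rnDeriv ν0 =ᵐ[ν0] h0 := by
      nth_rewrite 1 [hμ0eq]
      exact Measure.rnDeriv_withDensity ν0 hh0m
    have hrn0' : μ0.rnDeriv ν0 =ᵐ[μ0] h0 := hrn0.filter_mono hμ0ac.ae_le
    rw [lintegral_congr_ae hrn0']
    calc ∫⁻ x, h0 x ∂μ0 ≤ ∫⁻ _, ENNReal.ofReal C ∂μ0 :=
          lintegral_mono_ae (haeKμ0.mono fun x hx => (hbd x hx).2)
      _ = ENNReal.ofReal C := by simp
      _ < ⊤ := ENNReal.ofReal_lt_top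
end

section
/- Let m ≥ 1 and let λ denote Lebesgue measure on ℝ^m. Let q : ℝ^m × ℝ^m → (0,∞) be Borel measurable, let ν0 be a σ-finite Borel measure on ℝ^m, and let f : ℝ^m → [0,∞) be measurable such that μ0 := f · ν0 is a probability measure. Let ρT : ℝ^m → [0,∞) be measurable such that μT, the measure with density y ↦ ρT(y) · ∫ q(x,y) dν0(x) with respect to λ, is a probability measure. Assume 0 < ∫ q(x,y) dν0(x) < ∞ for λ-almost every y, and ∫ q(x,y) ρT(y) dλ(y) = f(x) for ν0-almost every x. Then ∫ log⁻( ( ∫ f(x) q(x,y) dν0(x) ) / ( ∫ q(x,y) dν0(x) ) ) dμT(y) ≤ ∫ log⁻( f(x) ) dμ0(x). -/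
open MeasureTheory

section Aux
open ENNReal

noncomputable def Lneg : ℝ → ℝ≥0∞ := fun u =>
  if u ≤ 0 then ⊤ else ENNReal.ofReal (max (-Real.log u) 0)

lemma Lneg_meas : Measurable Lneg := by
  unfold Lneg
  exact Measurable.ite (measurableSet_le measurable_id measurable_const)
    measurable_const
    (ENNReal.measurable_ofReal.comp
      ((Real.measurable_log.neg).max measurable_const))

lemma jensen_aux {α : Type*} [MeasurableSpace α] (ν : Measure α)
    (f : α → ℝ) (hf : Measurable f) (hf0 : ∀ x, 0 ≤ f x)
    (w : α → ℝ≥0∞) (hw : Measurable w)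
    (hc0 : 0 < ∫⁻ x, w x ∂ν) (hcfin : ∫⁻ x, w x ∂ν < ⊤) :
    (∫⁻ x, w x ∂ν) * ENNReal.ofReal (max (-Real.log
        ((∫⁻ x, ENNReal.ofReal (f x) * w x ∂ν).toReal / (∫⁻ x, w x ∂ν).toReal)) 0)
      ≤ ∫⁻ x, Lneg (f x) * w x ∂ν := by
  set c := ∫⁻ x, w x ∂ν with hc
  set A := ∫⁻ x, ENNReal.ofReal (f x) * w x ∂ν with hA
  set t0 := A.toReal / c.toReal with ht0
  rcases eq_or_ne A ⊤ with hAtop | hAtop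
  · simp [ht0, hAtop, Real.log_zero]
  rcases eq_or_ne A 0 with hA0 | hA0
  · simp [ht0, hA0, Real.log_zero]
  by_cases ht1 : 1 ≤ t0
  · rw [max_eq_right (neg_nonpos.mpr (Real.log_nonneg ht1))]
    simp
  push_neg at ht1
  have hcne : c ≠ ⊤ := hcfin.ne
  have hcpos : 0 < c.toReal := toReal_pos hc0.ne' hcne
  have hApos : 0 < A.toReal := toReal_pos hA0 hAtop
  have ht0pos : 0 < t0 := div_pos hApos hcpos
  -- pointwise key inequality
  have key : ∀ x, ENNReal.ofReal (1 - Real.log t0) * w x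
      ≤ (Lneg (f x) + ENNReal.ofReal t0⁻¹ * ENNReal.ofReal (f x)) * w x := by
    intro x
    apply mul_le_mul_left
    rcases eq_or_lt_of_le (hf0 x) with h0 | h0
    · simp [Lneg, ← h0]
    · have hL : Lneg (f x) = ENNReal.ofReal (max (-Real.log (f x)) 0) := by
        simp [Lneg, not_le.mpr h0]
      rw [hL, ← ENNReal.ofReal_mul (by positivity), ← ENNReal.ofReal_add
        (le_max_right _ _) (by positivity)]
      apply ENNReal.ofReal_le_ofReal
      have hlog : Real.log (f x / t0) ≤ f x / t0 - 1 :=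
        Real.log_le_sub_one_of_pos (by positivity)
      rw [Real.log_div h0.ne' ht0pos.ne'] at hlog
      have : 1 - Real.log t0 ≤ -Real.log (f x) + t0⁻¹ * f x := by
        rw [div_eq_inv_mul] at hlog; linarith
      calc 1 - Real.log t0 ≤ -Real.log (f x) + t0⁻¹ * f x := this
        _ ≤ max (-Real.log (f x)) 0 + t0⁻¹ * f x := by
            gcongr; exact le_max_left _ _
  have hmeasLw : Measurable fun x => Lneg (f x) * w x :=
    ((Lneg_meas.comp hf).mul hw)
  have hint : ENNReal.ofReal (1 - Real.log t0) * c
      ≤ (∫⁻ x, Lneg (f x) * w x ∂ν) + ENNReal.ofReal t0⁻¹ * A := by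
    calc ENNReal.ofReal (1 - Real.log t0) * c
        = ∫⁻ x, ENNReal.ofReal (1 - Real.log t0) * w x ∂ν :=
          (lintegral_const_mul _ hw).symm
      _ ≤ ∫⁻ x, (Lneg (f x) + ENNReal.ofReal t0⁻¹ * ENNReal.ofReal (f x)) * w x ∂ν :=
          lintegral_mono key
      _ = (∫⁻ x, Lneg (f x) * w x ∂ν)
            + ∫⁻ x, ENNReal.ofReal t0⁻¹ * (ENNReal.ofReal (f x) * w x) ∂ν := by
          simp_rw [add_mul, mul_assoc]
          exact lintegral_add_left hmeasLw _
      _ = (∫⁻ x, Lneg (f x) * w x ∂ν) + ENNReal.ofReal t0⁻¹ * A := by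
          rw [lintegral_const_mul _ (f := fun x => ENNReal.ofReal (f x) * w x) ((hf.ennreal_ofReal).mul hw)]
  have hinvA : ENNReal.ofReal t0⁻¹ * A = c := by
    rw [← ENNReal.ofReal_toReal hAtop, ← ENNReal.ofReal_mul (by positivity),
      ht0, inv_div, div_mul_cancel₀ _ hApos.ne', ENNReal.ofReal_toReal hcne]
  rw [hinvA] at hint
  have hlogneg : 0 ≤ -Real.log t0 := neg_nonneg.mpr (Real.log_nonpos ht0pos.le ht1.le)
  have hsplit : ENNReal.ofReal (1 - Real.log t0)
      = ENNReal.ofReal (-Real.log t0) + 1 := by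
    rw [show (1 : ℝ) - Real.log t0 = -Real.log t0 + 1 by ring,
      ENNReal.ofReal_add hlogneg zero_le_one, ENNReal.ofReal_one]
  rw [hsplit, add_mul, one_mul] at hint
  rw [max_eq_left hlogneg, mul_comm]
  exact (ENNReal.add_le_add_iff_right hcne).mp hint

end Aux

/-- **Key estimate in the proof of Lemma 1**: the `μT`-integral of `log⁻` of the
density ratio `d(S_T μ0)/d(S_T ν0)` is bounded by `∫ log⁻(dμ0/dν0) dμ0`.  Here
`log⁻ x = max (−log x) 0`, `μ0 = f · ν0` and `μT` has density
`y ↦ ρT(y) ∫ q(x,y) dν0(x)` with respect to Lebesgue measure `λ` on `ℝ^m`. -/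
theorem stmt_9 (m : ℕ) (hm : 1 ≤ m)
    (q : (Fin m → ℝ) × (Fin m → ℝ) → ℝ)
    (hqm : Measurable q) (hqpos : ∀ p, 0 < q p)
    (ν0 : Measure (Fin m → ℝ)) [SigmaFinite ν0]
    (f : (Fin m → ℝ) → ℝ) (hf : Measurable f) (hf0 : ∀ x, 0 ≤ f x)
    (hμ0 : IsProbabilityMeasure (ν0.withDensity fun x => ENNReal.ofReal (f x)))
    (ρT : (Fin m → ℝ) → ℝ) (hρ : Measurable ρT) (hρ0 : ∀ y, 0 ≤ ρT y)
    (hμT : IsProbabilityMeasure (MeasureTheory.volume.withDensity fun y =>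
      ENNReal.ofReal (ρT y) * ∫⁻ x, ENNReal.ofReal (q (x, y)) ∂ν0))
    (hfin : ∀ᵐ y ∂(MeasureTheory.volume : Measure (Fin m → ℝ)),
      0 < ∫⁻ x, ENNReal.ofReal (q (x, y)) ∂ν0 ∧
        ∫⁻ x, ENNReal.ofReal (q (x, y)) ∂ν0 < ⊤)
    (hsys : ∀ᵐ x ∂ν0,
      ∫⁻ y, ENNReal.ofReal (q (x, y) * ρT y) = ENNReal.ofReal (f x)) :
    ∫⁻ y, ENNReal.ofReal (max (-Real.log
          ((∫⁻ x, ENNReal.ofReal (f x * q (x, y)) ∂ν0).toReal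
            / (∫⁻ x, ENNReal.ofReal (q (x, y)) ∂ν0).toReal)) 0)
        ∂(MeasureTheory.volume.withDensity fun y =>
          ENNReal.ofReal (ρT y) * ∫⁻ x, ENNReal.ofReal (q (x, y)) ∂ν0)
      ≤ ∫⁻ x, ENNReal.ofReal (max (-Real.log (f x)) 0)
          ∂(ν0.withDensity fun x => ENNReal.ofReal (f x)) := by
  have hcm : Measurable fun y => ∫⁻ x, ENNReal.ofReal (q (x, y)) ∂ν0 :=
    Measurable.lintegral_prod_left' hqm.ennreal_ofReal
  have hAm : Measurable fun y => ∫⁻ x, ENNReal.ofReal (f x * q (x, y)) ∂ν0 :=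
    Measurable.lintegral_prod_left' (((hf.comp measurable_fst).mul hqm).ennreal_ofReal)
  have hGm : Measurable fun y => ENNReal.ofReal (max (-Real.log
      ((∫⁻ x, ENNReal.ofReal (f x * q (x, y)) ∂ν0).toReal
        / (∫⁻ x, ENNReal.ofReal (q (x, y)) ∂ν0).toReal)) 0) :=
    (((Real.measurable_log.comp (hAm.ennreal_toReal.div hcm.ennreal_toReal)).neg).max
      measurable_const).ennreal_ofReal
  have hg2 : Measurable fun x => ENNReal.ofReal (max (-Real.log (f x)) 0) :=
    (((Real.measurable_log.comp hf).neg).max measurable_const).ennreal_ofReal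
  rw [lintegral_withDensity_eq_lintegral_mul _
      (f := fun y => ENNReal.ofReal (ρT y) * ∫⁻ x, ENNReal.ofReal (q (x, y)) ∂ν0) (hρ.ennreal_ofReal.mul hcm) hGm,
    lintegral_withDensity_eq_lintegral_mul _ hf.ennreal_ofReal hg2]
  simp only [Pi.mul_apply]
  have hLw : ∀ y, Measurable fun x => Lneg (f x) * ENNReal.ofReal (q (x, y)) := fun y =>
    (Lneg_meas.comp hf).mul ((hqm.comp (measurable_id.prodMk measurable_const)).ennreal_ofReal)
  calc ∫⁻ y, (ENNReal.ofReal (ρT y) * ∫⁻ x, ENNReal.ofReal (q (x, y)) ∂ν0) *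
        ENNReal.ofReal (max (-Real.log
          ((∫⁻ x, ENNReal.ofReal (f x * q (x, y)) ∂ν0).toReal
            / (∫⁻ x, ENNReal.ofReal (q (x, y)) ∂ν0).toReal)) 0)
      ≤ ∫⁻ y, ENNReal.ofReal (ρT y) *
          ∫⁻ x, Lneg (f x) * ENNReal.ofReal (q (x, y)) ∂ν0 := by
        refine lintegral_mono_ae (hfin.mono fun y hy => ?_)
        rw [mul_assoc]
        refine mul_le_mul_right ?_ _
        have hrw : (∫⁻ x, ENNReal.ofReal (f x * q (x, y)) ∂ν0)
            = ∫⁻ x, ENNReal.ofReal (f x) * ENNReal.ofReal (q (x, y)) ∂ν0 :=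
          lintegral_congr fun x => ENNReal.ofReal_mul (hf0 x)
        rw [hrw]
        exact jensen_aux ν0 f hf hf0 _
          ((hqm.comp (measurable_id.prodMk measurable_const)).ennreal_ofReal) hy.1 hy.2
    _ = ∫⁻ y, ∫⁻ x, Lneg (f x) * ENNReal.ofReal (q (x, y) * ρT y) ∂ν0 := by
        refine lintegral_congr fun y => ?_
        rw [← lintegral_const_mul _ (hLw y)]
        refine lintegral_congr fun x => ?_
        rw [ENNReal.ofReal_mul (hqpos (x, y)).le]
        ring
    _ = ∫⁻ x, ∫⁻ y, Lneg (f x) * ENNReal.ofReal (q (x, y) * ρT y) ∂(volume) ∂ν0 := by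
        refine (lintegral_lintegral_swap ?_).symm
        refine Measurable.aemeasurable ?_
        apply Measurable.mul
        · exact Lneg_meas.comp (hf.comp measurable_fst)
        · exact ((hqm.comp (measurable_fst.prodMk measurable_snd)).mul
            (hρ.comp measurable_snd)).ennreal_ofReal
    _ = ∫⁻ x, Lneg (f x) * ENNReal.ofReal (f x) ∂ν0 := by
        refine lintegral_congr_ae (hsys.mono fun x hx => ?_)
        have hmx : Measurable fun y => ENNReal.ofReal (q (x, y) * ρT y) :=
          ((hqm.comp (measurable_const.prodMk measurable_id)).mul hρ).ennreal_ofReal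
        show (∫⁻ y, Lneg (f x) * ENNReal.ofReal (q (x, y) * ρT y)) = _
        rw [lintegral_const_mul _ hmx, hx]
    _ = ∫⁻ x, ENNReal.ofReal (f x) * ENNReal.ofReal (max (-Real.log (f x)) 0) ∂ν0 := by
        refine lintegral_congr fun x => ?_
        rcases eq_or_lt_of_le (hf0 x) with h0 | h0
        · simp [← h0]
        · rw [show Lneg (f x) = ENNReal.ofReal (max (-Real.log (f x)) 0) by
            simp [Lneg, not_le.mpr h0], mul_comm]
end
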